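/- Let f : R → S be a flat ring homomorphism between commutative Noetherian rings, and let M be a finitely generated R-module such that the localization M_𝔭 is zero for every prime ideal 𝔭 of R of height at most 1. Then for every prime ideal 𝔮 of S of height at most 1, the localization (S ⊗_R M)_𝔮 is zero. -/
import Mathlib

open TensorProduct

section aux

variable {R S : Type*} [CommRing R] [CommRing S] [Algebra R S] [Module.Flat R S]

/-- If `S` is flat over `R`, `p'` is prime, `r ∉ p'`, then `f(r) * s ∈ p'S` implies `s ∈ p'S`. -/
lemma flat_colon_aux (p' : Ideal R) [hp' : p'.IsPrime] {r : R} (hr : r ∉ p') {s : S}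
    (hs : algebraMap R S r * s ∈ p'.map (algebraMap R S)) :
    s ∈ p'.map (algebraMap R S) := by
  have hmem_iff : ∀ t : S, t ∈ p' • (⊤ : Submodule R S) ↔ t ∈ p'.map (algebraMap R S) := by
    intro t
    rw [Ideal.smul_top_eq_map]
    rfl
  -- multiplication by `r` on `R ⧸ p'` is injective
  set φ : (R ⧸ p') →ₗ[R] (R ⧸ p') := r • LinearMap.id with hφdef
  have hφ : Function.Injective φ := by
    rw [← LinearMap.ker_eq_bot, eq_bot_iff]
    rintro x hx
    obtain ⟨a, rfl⟩ := Ideal.Quotient.mk_surjective (I := p') x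
    have e1 : (Ideal.Quotient.mk p') (r * a) = r • (Ideal.Quotient.mk p') a := by
      rw [map_mul, Algebra.smul_def, Ideal.Quotient.algebraMap_eq]
    have hx' : (Ideal.Quotient.mk p') (r * a) = 0 := by
      rw [e1]
      simpa [hφdef] using hx
    have hra : r * a ∈ p' := Ideal.Quotient.eq_zero_iff_mem.mp hx'
    rcases hp'.mem_or_mem hra with h | h
    · exact absurd h hr
    · exact (Submodule.mem_bot _).mpr (Ideal.Quotient.eq_zero_iff_mem.mpr h)
  -- hence multiplication by `r` on `S ⊗ (R ⧸ p')` is injective, by flatness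
  have hinj : Function.Injective (LinearMap.lTensor S φ) :=
    Module.Flat.lTensor_preserves_injective_linearMap φ hφ
  have hlt : LinearMap.lTensor S φ = r • (LinearMap.id : S ⊗[R] (R ⧸ p') →ₗ[R] _) := by
    apply TensorProduct.ext'
    intro x y
    simp [hφdef, TensorProduct.tmul_smul]
  -- transfer to `S ⧸ p' • ⊤`
  have key : ∀ x : S ⧸ (p' • (⊤ : Submodule R S)), r • x = 0 → x = 0 := by
    intro x hx
    set e := TensorProduct.tensorQuotEquivQuotSMul S p' with he
    have h1 : LinearMap.lTensor S φ (e.symm x) = 0 := by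
      rw [hlt]
      simp only [LinearMap.smul_apply, LinearMap.id_apply]
      rw [← map_smul, hx, map_zero]
    have h0 : LinearMap.lTensor S φ (e.symm x) = LinearMap.lTensor S φ 0 := by
      rw [h1, map_zero]
    have h2 : e.symm x = 0 := hinj h0
    rw [← e.apply_symm_apply x, h2, map_zero]
  -- conclude
  have hmem : r • s ∈ p' • (⊤ : Submodule R S) := by
    rw [hmem_iff]
    simpa [Algebra.smul_def] using hs
  have h3 : r • (Submodule.Quotient.mk s : S ⧸ (p' • (⊤ : Submodule R S))) = 0 := by
    rw [← Submodule.Quotient.mk_smul, Submodule.Quotient.mk_eq_zero]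
    exact hmem
  have h4 : (Submodule.Quotient.mk s : S ⧸ (p' • (⊤ : Submodule R S))) = 0 := key _ h3
  exact (hmem_iff s).mp ((Submodule.Quotient.mk_eq_zero _).mp h4)

/-- Going down for flat ring maps. -/
lemma flat_going_down (q : Ideal S) [hq : q.IsPrime] (p' : Ideal R) [hp' : p'.IsPrime]
    (h : p' ≤ q.comap (algebraMap R S)) :
    ∃ q' : Ideal S, q'.IsPrime ∧ q' ≤ q ∧ q'.comap (algebraMap R S) = p' := by
  have h1p' : (1 : R) ∉ p' := fun hm => hp'.ne_top ((Ideal.eq_top_iff_one p').mpr hm)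
  have h1q : (1 : S) ∉ q := fun hm => hq.ne_top ((Ideal.eq_top_iff_one q).mpr hm)
  -- the multiplicative set of products f(r)·s with r ∉ p', s ∉ q
  set W : Submonoid S :=
    { carrier := {x | ∃ r ∉ p', ∃ s ∉ q, algebraMap R S r * s = x}
      one_mem' := ⟨1, h1p', 1, h1q, by simp⟩
      mul_mem' := by
        rintro x y ⟨r₁, hr₁, s₁, hs₁, rfl⟩ ⟨r₂, hr₂, s₂, hs₂, rfl⟩
        refine ⟨r₁ * r₂, fun hm => ?_, s₁ * s₂, fun hm => ?_, by rw [map_mul]; ring⟩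
        · rcases hp'.mem_or_mem hm with h | h <;> [exact hr₁ h; exact hr₂ h]
        · rcases hq.mem_or_mem hm with h | h <;> [exact hs₁ h; exact hs₂ h] } with hW
  have hdisj : Disjoint ((p'.map (algebraMap R S) : Ideal S) : Set S) (W : Set S) := by
    rw [Set.disjoint_left]
    rintro x hx ⟨r, hr, s, hs, rfl⟩
    exact hs (Ideal.map_le_iff_le_comap.mpr h (flat_colon_aux p' hr hx))
  obtain ⟨P, hP, hle, hPdisj⟩ := Ideal.exists_le_prime_disjoint _ W hdisj
  refine ⟨P, hP, ?_, ?_⟩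
  · intro t ht
    by_contra htq
    exact Set.disjoint_left.mp hPdisj ht ⟨1, h1p', t, htq, by simp⟩
  · refine le_antisymm (fun a ha => ?_) (Ideal.map_le_iff_le_comap.mp hle)
    by_contra hap
    exact Set.disjoint_left.mp hPdisj ha ⟨a, hap, 1, h1q, by simp⟩

end aux

/-- **Flat base change preserves pseudo-nullity.**
Let `f : R → S` (here `algebraMap R S`) be a flat ring homomorphism between commutative
Noetherian rings, and let `M` be a finitely generated `R`-module whose localization at
every prime ideal of `R` of height at most `1` vanishes.  Then for every prime ideal `q`
of `S` of height at most `1`, the localization of `S ⊗[R] M` at `q` vanishes.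
(Heights are taken in the prime spectrum, i.e. suprema of lengths of chains of primes.) -/
theorem stmt_0 {R S : Type*} [CommRing R] [CommRing S]
    [IsNoetherianRing R] [IsNoetherianRing S]
    [Algebra R S] [Module.Flat R S]
    (M : Type*) [AddCommGroup M] [Module R M] [Module.Finite R M]
    (hM : ∀ (p : Ideal R) [hp : p.IsPrime],
      Order.height (⟨p, hp⟩ : PrimeSpectrum R) ≤ 1 →
      Subsingleton (LocalizedModule p.primeCompl M)) :
    ∀ (q : Ideal S) [hq : q.IsPrime],
      Order.height (⟨q, hq⟩ : PrimeSpectrum S) ≤ 1 →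
      Subsingleton (LocalizedModule q.primeCompl (S ⊗[R] M)) := by
  intro q hq hqht
  set p : Ideal R := q.comap (algebraMap R S) with hpdef
  haveI hp : p.IsPrime := Ideal.IsPrime.comap _
  -- Step 1: height p ≤ 1 via going down
  have hpht : Order.height (⟨p, hp⟩ : PrimeSpectrum R) ≤ 1 := by
    by_contra hcon
    have h2 : ((2 : ℕ) : ℕ∞) ≤ Order.height (⟨p, hp⟩ : PrimeSpectrum R) := by
      have := Order.add_one_le_of_lt (not_le.mp hcon)
      simpa [one_add_one_eq_two] using this
    obtain ⟨P, hlast, hlen⟩ := Order.exists_series_of_le_height (⟨p, hp⟩ : PrimeSpectrum R) h2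
    have h01 : P ⟨0, by omega⟩ < P ⟨1, by omega⟩ := P.step ⟨0, by omega⟩
    have h12 : P ⟨1, by omega⟩ < P ⟨2, by omega⟩ := P.step ⟨1, by omega⟩
    have hlast2 : P ⟨2, by omega⟩ = (⟨p, hp⟩ : PrimeSpectrum R) := by
      rw [← hlast]
      congr 1
      simp [Fin.last, hlen]
    set x0 := P ⟨0, by omega⟩
    set x1 := P ⟨1, by omega⟩
    rw [hlast2] at h12
    haveI := x0.isPrime
    haveI := x1.isPrime
    -- lift x1 under q
    obtain ⟨q1, hq1p, hq1le, hq1comap⟩ := flat_going_down q x1.asIdeal h12.le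
    haveI := hq1p
    have hq1lt : q1 < q := lt_of_le_of_ne hq1le (fun he => h12.ne (PrimeSpectrum.ext (by
      rw [← hq1comap, he])))
    -- lift x0 under q1
    have h01' : x0.asIdeal ≤ q1.comap (algebraMap R S) := by
      rw [hq1comap]; exact h01.le
    obtain ⟨q0, hq0p, hq0le, hq0comap⟩ := flat_going_down q1 x0.asIdeal h01'
    haveI := hq0p
    have hq0lt : q0 < q1 := lt_of_le_of_ne hq0le (fun he => h01.ne (PrimeSpectrum.ext (by
      rw [← hq0comap, he]
      exact hq1comap)))
    -- build a chain of length 2 below q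
    have hq0lt' : (⟨q0, hq0p⟩ : PrimeSpectrum S) < ⟨q1, hq1p⟩ := hq0lt
    have hq1lt' : (⟨q1, hq1p⟩ : PrimeSpectrum S) < ⟨q, hq⟩ := hq1lt
    let C1 : LTSeries (PrimeSpectrum S) :=
      (RelSeries.singleton _ (⟨q0, hq0p⟩ : PrimeSpectrum S)).snoc ⟨q1, hq1p⟩
        (by rw [RelSeries.last_singleton]; exact hq0lt')
    let C : LTSeries (PrimeSpectrum S) :=
      C1.snoc ⟨q, hq⟩ (by rw [RelSeries.last_snoc]; exact hq1lt')
    have hClast : C.last = (⟨q, hq⟩ : PrimeSpectrum S) := RelSeries.last_snoc _ _ _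
    have hClen : C.length = 2 := rfl
    have hle2 := Order.length_le_height_last (p := C)
    rw [hClast, hClen] at hle2
    exact absurd (hle2.trans hqht) (by norm_num)
  -- Step 2: M_p = 0 gives an annihilating element outside p
  have hsub := hM p hpht
  have hann : ¬ Module.annihilator R M ≤ p := by
    intro hle
    have hm : (⟨p, hp⟩ : PrimeSpectrum R) ∈ Module.support R M :=
      Module.mem_support_iff_of_finite.mpr hle
    rw [Module.mem_support_iff] at hm
    exact absurd hsub (not_subsingleton_iff_nontrivial.mpr hm)
  obtain ⟨r, hrann, hrp⟩ := SetLike.not_le_iff_exists.mp hann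
  -- Step 3: r kills M, hence S ⊗ M, and its image is outside q
  have hkill : ∀ z : S ⊗[R] M, r • z = 0 := by
    intro z
    induction z using TensorProduct.induction_on with
    | zero => simp
    | tmul s m =>
        rw [TensorProduct.smul_tmul' r s m, TensorProduct.smul_tmul,
          Module.mem_annihilator.mp hrann m, TensorProduct.tmul_zero]
    | add x y hx hy => rw [smul_add, hx, hy, add_zero]
  rw [LocalizedModule.subsingleton_iff]
  intro z
  exact ⟨algebraMap R S r, fun hm => hrp (Ideal.mem_comap.mpr hm), by
    rw [algebraMap_smul]; exact hkill z⟩
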